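/- RSK row insertion of x into a tableau S with distinct entries, increasing rows and columns, and not containing x, produces a tableau T whose shape is the shape of S plus one box, whose entries are those of S together with x, and this insertion is invertible: given T and the added box, one can uniquely recover S and x by uninsertion. -/

import Mathlib

/-- RSK row insertion of `x` into a tableau given as its list of rows. -/
def rowInsert : ℕ → List (List ℕ) → List (List ℕ)
  | x, [] => [[x]]
  | x, R :: rest =>
    match R.findIdx? (fun y => decide (x < y)) with
    | none => (R ++ [x]) :: rest
    | some idx => (R.set idx x) :: rowInsert (R.getD idx 0) rest

/-- `S` is a tableau with distinct positive entries, strictly increasing rows and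
columns (rows listed top to bottom, with weakly decreasing lengths and no empty row). -/
def IsTableau (S : List (List ℕ)) : Prop :=
  (∀ R ∈ S, List.Pairwise (· < ·) R) ∧
  (∀ i, i + 1 < S.length → (S.getD (i+1) []).length ≤ (S.getD i []).length) ∧
  (∀ i j, i + 1 < S.length → j < (S.getD (i+1) []).length →
    (S.getD i []).getD j 0 < (S.getD (i+1) []).getD j 0) ∧
  S.flatten.Nodup ∧
  (∀ y ∈ S.flatten, 0 < y) ∧
  (∀ R ∈ S, R ≠ [])

open List

lemma sorted_lt_getElem {R : List ℕ} (h : List.Pairwise (· < ·) R) {i j : ℕ} (hij : i < j)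
    (hj : j < R.length) : R[i]'(lt_trans hij hj) < R[j] := by
  have := h.rel_get_of_lt (a := ⟨i, lt_trans hij hj⟩) (b := ⟨j, hj⟩) hij
  simpa using this

lemma sorted_of_succ {l : List ℕ} (h : ∀ i (hi : i + 1 < l.length), l[i] < l[i+1]) :
    List.Pairwise (· < ·) l := by
  rw [← List.isChain_iff_pairwise]
  rw [List.isChain_iff_getElem]
  intro i hi
  simpa using h i (by omega)

lemma findIdx?_none_forall {x : ℕ} {R : List ℕ}
    (h : R.findIdx? (fun y => decide (x < y)) = none) : ∀ y ∈ R, y ≤ x := by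
  intro y hy
  have := (List.findIdx?_eq_none_iff).1 h y hy
  simpa using this

lemma findIdx?_some_spec {x : ℕ} {R : List ℕ} {idx : ℕ}
    (h : R.findIdx? (fun y => decide (x < y)) = some idx) :
    ∃ hlen : idx < R.length, x < R[idx] ∧ ∀ k (hk : k < idx), R[k]'(lt_trans hk hlen) ≤ x := by
  obtain ⟨hlen, heq⟩ := List.findIdx?_eq_some_iff_findIdx_eq.1 h
  refine ⟨hlen, ?_, ?_⟩
  · subst heq
    have := List.findIdx_getElem (p := fun y => decide (x < y)) (xs := R) (w := hlen)
    simpa using this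
  · intro k hk
    have := List.not_of_lt_findIdx (p := fun y => decide (x < y)) (xs := R) (i := k)
      (by omega)
    simp only [decide_eq_false_iff_not, not_lt] at this
    exact this

lemma rowInsert_nil (x : ℕ) : rowInsert x [] = [[x]] := rfl

lemma rowInsert_cons_none {x : ℕ} {R : List ℕ} {rest : List (List ℕ)}
    (h : R.findIdx? (fun y => decide (x < y)) = none) :
    rowInsert x (R :: rest) = (R ++ [x]) :: rest := by
  rw [rowInsert, h]

lemma rowInsert_cons_some {x idx : ℕ} {R : List ℕ} {rest : List (List ℕ)}
    (h : R.findIdx? (fun y => decide (x < y)) = some idx) :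
    rowInsert x (R :: rest) = (R.set idx x) :: rowInsert (R.getD idx 0) rest := by
  rw [rowInsert, h]

lemma set_self {l : List ℕ} {n : ℕ} (h : n < l.length) : l.set n (l[n]) = l := by
  apply List.ext_getElem (by simp)
  intro i h1 h2
  rw [List.getElem_set]
  split
  · subst ‹n = i›; rfl
  · rfl

lemma set_perm {R L : List ℕ} {idx x : ℕ} (hidx : idx < R.length) :
    (R.set idx x ++ (R[idx] :: L)).Perm (x :: (R ++ L)) := by
  have hR : R.take idx ++ R[idx] :: R.drop (idx+1) = R := by
    rw [List.getElem_cons_drop, List.take_append_drop]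
  have hset : R.set idx x = R.take idx ++ x :: R.drop (idx+1) := by
    conv_lhs => rw [← hR]
    rw [List.set_append]
    simp [List.length_take, Nat.min_eq_left hidx.le]
    rw [← List.getElem_cons_drop hidx]
    rfl
  rw [hset]
  calc R.take idx ++ x :: R.drop (idx+1) ++ (R[idx] :: L)
      = R.take idx ++ x :: (R.drop (idx+1) ++ R[idx] :: L) := by simp
    _ ~ x :: (R.take idx ++ (R.drop (idx+1) ++ R[idx] :: L)) := List.perm_middle
    _ ~ x :: (R ++ L) := by
        refine List.Perm.cons x ?_
        calc R.take idx ++ (R.drop (idx+1) ++ R[idx] :: L)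
            ~ R.take idx ++ (R[idx] :: (R.drop (idx+1) ++ L)) :=
              List.Perm.append_left _ List.perm_middle
          _ = (R.take idx ++ R[idx] :: R.drop (idx+1)) ++ L := by
              rw [List.append_assoc, List.cons_append]
          _ = R ++ L := by rw [hR]

lemma isTableau_nil : IsTableau [] := by
  refine ⟨by simp, by simp, by simp, by simp, by simp, by simp⟩

lemma isTableau_cons {R : List ℕ} {rest : List (List ℕ)} :
    IsTableau (R :: rest) ↔
    List.Pairwise (· < ·) R ∧ R ≠ [] ∧ (∀ y ∈ R, 0 < y) ∧ (∀ y ∈ R, y ∉ rest.flatten) ∧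
    (rest.getD 0 []).length ≤ R.length ∧
    (∀ j, j < (rest.getD 0 []).length → R.getD j 0 < (rest.getD 0 []).getD j 0) ∧
    IsTableau rest := by
  constructor
  · rintro ⟨h1, h2, h3, h4, h5, h6⟩
    rw [List.flatten_cons, List.nodup_append] at h4
    refine ⟨h1 R (by simp), h6 R (by simp), fun y hy => h5 y (by simp [hy]),
      fun y hy hyr => h4.2.2 y hy y hyr rfl, ?_, ?_, ?_⟩
    · rcases rest with _ | ⟨R', rest'⟩
      · simp
      · simpa using h2 0 (by simp)
    · intro j hj
      rcases rest with _ | ⟨R', rest'⟩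
      · simp at hj
      · simpa using h3 0 j (by simp) (by simpa using hj)
    · refine ⟨fun R' hR' => h1 R' (by simp [hR']), ?_, ?_, h4.2.1,
        fun y hy => h5 y (by simp [hy]), fun R' hR' => h6 R' (by simp [hR'])⟩
      · intro i hi
        simpa using h2 (i+1) (by simpa using hi)
      · intro i j hi hj
        simpa using h3 (i+1) j (by simpa using hi) (by simpa using hj)
  · rintro ⟨hsort, hne, hpos, hdisj, hlen0, hcol0, h1, h2, h3, h4, h5, h6⟩
    refine ⟨?_, ?_, ?_, ?_, ?_, ?_⟩
    · intro R' hR'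
      rcases List.mem_cons.1 hR' with rfl | hR'
      · exact hsort
      · exact h1 R' hR'
    · intro i hi
      match i with
      | 0 =>
        rcases rest with _ | ⟨R', rest'⟩
        · simp at hi
        · simpa using hlen0
      | Nat.succ i => exact h2 i (by simpa using hi)
    · intro i j hi hj
      match i with
      | 0 =>
        rcases rest with _ | ⟨R', rest'⟩
        · simp at hi
        · simp only [List.getD_cons_succ, List.getD_cons_zero] at hj ⊢
          exact hcol0 j (by simpa using hj)
      | Nat.succ i => exact h3 i j (by simpa using hi) (by simpa using hj)
    · rw [List.flatten_cons, List.nodup_append]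
      exact ⟨hsort.nodup, h4, fun y hy b hb hyb => hdisj y hy (hyb ▸ hb)⟩
    · intro y hy
      rw [List.flatten_cons, List.mem_append] at hy
      rcases hy with hy | hy
      · exact hpos y hy
      · exact h5 y hy
    · intro R' hR'
      rcases List.mem_cons.1 hR' with rfl | hR'
      · exact hne
      · exact h6 R' hR'

lemma sorted_le_getElem {R : List ℕ} (h : List.Pairwise (· < ·) R) {i j : ℕ} (hij : i ≤ j)
    (hj : j < R.length) : R[i]'(lt_of_le_of_lt hij hj) ≤ R[j] := by
  rcases eq_or_lt_of_le hij with rfl | hlt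
  · exact le_refl _
  · exact (sorted_lt_getElem h hlt hj).le

lemma getD_append_left' {R : List ℕ} {z : ℕ} {j : ℕ} (h : j < R.length) :
    (R ++ [z]).getD j 0 = R.getD j 0 := by
  rw [List.getD_eq_getElem _ _ (by simp; omega), List.getD_eq_getElem _ _ h]
  exact List.getElem_append_left h

/-- RSK row insertion of `x` into a tableau `S` not containing `x` produces a tableau
whose shape is that of `S` plus one box and whose entries are those of `S` together
with `x`; moreover insertion is invertible: the result together with the shape of `S`
(equivalently, the added box) uniquely determines `S` and `x`. -/
theorem rowInsert_spec (S : List (List ℕ)) (x : ℕ)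
    (hS : IsTableau S) (hx : 0 < x) (hxS : x ∉ S.flatten) :
    IsTableau (rowInsert x S) ∧
    (rowInsert x S).flatten.Perm (x :: S.flatten) ∧
    ((rowInsert x S).map List.length).sum = (S.map List.length).sum + 1 ∧
    (∀ i, (S.getD i []).length ≤ ((rowInsert x S).getD i []).length) ∧
    (∀ S' x', IsTableau S' → 0 < x' → x' ∉ S'.flatten →
      rowInsert x' S' = rowInsert x S → S'.map List.length = S.map List.length →
      S' = S ∧ x' = x) := by
  induction S generalizing x with
  | nil =>
    refine ⟨?_, by simp [rowInsert_nil], by simp [rowInsert_nil],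
      by intro i; simp [List.getD], ?_⟩
    · rw [rowInsert_nil, isTableau_cons]
      refine ⟨by simp, by simp, by simpa using hx, by simp, by simp, by simp, isTableau_nil⟩
    · intro S' x' hS' hx' hxS' heq hshape
      have hS'nil : S' = [] := by simpa using hshape
      subst hS'nil
      rw [rowInsert_nil, rowInsert_nil] at heq
      simp only [List.cons.injEq] at heq
      exact ⟨rfl, by simpa using heq⟩
  | cons R rest ih =>
    rw [isTableau_cons] at hS
    obtain ⟨hsort, hne, hpos, hdisj, hlen0, hcol0, hrest⟩ := hS
    simp only [List.flatten_cons, List.mem_append] at hxS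
    push_neg at hxS
    obtain ⟨hxR, hxrest⟩ := hxS
    cases hcase : R.findIdx? (fun y => decide (x < y)) with
    | none =>
      have hle : ∀ y ∈ R, y < x := fun y hy =>
        lt_of_le_of_ne (findIdx?_none_forall hcase y hy) (fun h => hxR (h ▸ hy))
      rw [rowInsert_cons_none hcase]
      refine ⟨?_, ?_, ?_, ?_, ?_⟩
      · rw [isTableau_cons]
        refine ⟨?_, by simp, ?_, ?_, ?_, ?_, hrest⟩
        · rw [List.pairwise_append]
          refine ⟨hsort, by simp, ?_⟩
          intro a ha b hb
          simp only [List.mem_singleton] at hb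
          subst hb
          exact hle a ha
        · intro z hz
          rcases List.mem_append.1 hz with hz | hz
          · exact hpos z hz
          · simp only [List.mem_singleton] at hz; subst hz; exact hx
        · intro z hz
          rcases List.mem_append.1 hz with hz | hz
          · exact hdisj z hz
          · simp only [List.mem_singleton] at hz; subst hz; exact hxrest
        · simp only [List.length_append, List.length_singleton]
          omega
        · intro j hj
          rw [getD_append_left' (lt_of_lt_of_le hj hlen0)]
          exact hcol0 j hj
      · simp only [List.flatten_cons, List.append_assoc, List.singleton_append]
        exact List.perm_middle
      · simp only [List.map_cons, List.sum_cons, List.length_append, List.length_singleton]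
        omega
      · intro i
        match i with
        | 0 => simp
        | Nat.succ i => simp
      · intro S' x' hS' hx' hxS' heq hshape
        rcases S' with _ | ⟨R', rest'⟩
        · simp at hshape
        simp only [List.map_cons, List.cons.injEq] at hshape
        obtain ⟨hlenR, hshape'⟩ := hshape
        cases hcase' : R'.findIdx? (fun z => decide (x' < z)) with
        | none =>
          rw [rowInsert_cons_none hcase'] at heq
          simp only [List.cons.injEq] at heq
          obtain ⟨h1, h2⟩ := heq
          obtain ⟨hR, hxx⟩ := List.append_inj h1 hlenR
          simp only [List.cons.injEq, and_true] at hxx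
          subst hR
          exact ⟨by rw [h2], hxx⟩
        | some idx' =>
          rw [rowInsert_cons_some hcase'] at heq
          have hlens := congrArg (fun l => (l.getD 0 []).length) heq
          simp only [List.getD_cons_zero, List.length_set, List.length_append,
            List.length_singleton] at hlens
          omega
    | some idx =>
      obtain ⟨hidx, hxy, hbef⟩ := findIdx?_some_spec hcase
      have hbef' : ∀ k (hk : k < idx), R[k]'(lt_trans hk hidx) < x := fun k hk =>
        lt_of_le_of_ne (hbef k hk) (fun h => hxR (h ▸ List.getElem_mem _))
      have hgetD : R.getD idx 0 = R[idx] := List.getD_eq_getElem _ _ hidx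
      have hyR : R[idx] ∈ R := List.getElem_mem _
      have hypos : 0 < R[idx] := hpos _ hyR
      have hyrest : R[idx] ∉ rest.flatten := hdisj _ hyR
      obtain ⟨ihT, ihperm, ihsum, ihmono, ihinv⟩ := ih (R[idx]) hrest hypos hyrest
      rw [rowInsert_cons_some hcase, hgetD]
      -- sortedness of the new first row
      have hLsort : List.Pairwise (· < ·) (R.set idx x) := by
        apply sorted_of_succ
        intro i hi
        simp only [List.length_set] at hi
        rw [List.getElem_set, List.getElem_set]
        by_cases h1 : idx = i
        · subst h1
          rw [if_pos rfl, if_neg (by omega)]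
          exact lt_trans hxy (sorted_lt_getElem hsort (by omega) (by simpa using hi))
        · rw [if_neg h1]
          by_cases h2 : idx = i + 1
          · rw [if_pos h2]
            exact hbef' i (by omega)
          · rw [if_neg h2]
            exact sorted_lt_getElem hsort (by omega) (by simpa using hi)
      have hsetle : ∀ j (hjR : j < R.length),
          (R.set idx x)[j]'(by simpa using hjR) ≤ R[j] := by
        intro j hjR
        rw [List.getElem_set]
        split
        · next h => subst h; exact hxy.le
        · exact le_refl _
      -- the bumping facts about the first row of the recursive insertion
      have hmain : ((rowInsert (R[idx]) rest).getD 0 []).length ≤ R.length ∧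
          ∀ j, j < ((rowInsert (R[idx]) rest).getD 0 []).length →
            (R.set idx x).getD j 0 < ((rowInsert (R[idx]) rest).getD 0 []).getD j 0 := by
        rcases rest with _ | ⟨R', rest'⟩
        · constructor
          · simp only [rowInsert_nil, List.getD_cons_zero, List.length_singleton]
            omega
          · intro j hj
            simp only [rowInsert_nil, List.getD_cons_zero, List.length_singleton] at hj ⊢
            have hj0 : j = 0 := by omega
            subst hj0
            rw [List.getD_eq_getElem _ _ (by simp; omega)]
            simp only [List.getD_cons_zero]
            rw [List.getElem_set]
            by_cases h1 : idx = 0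
            · rw [if_pos h1]; exact hxy
            · rw [if_neg h1]
              exact lt_trans (hbef' 0 (by omega)) hxy
        · simp only [List.getD_cons_zero] at hlen0 hcol0
          have hcol0' : ∀ j (hj : j < R'.length),
              R[j]'(lt_of_lt_of_le hj hlen0) < R'[j] := by
            intro j hj
            have := hcol0 j hj
            rwa [List.getD_eq_getElem _ _ (lt_of_lt_of_le hj hlen0),
              List.getD_eq_getElem _ _ hj] at this
          cases hcase' : R'.findIdx? (fun z => decide (R[idx] < z)) with
          | none =>
            have hallle : ∀ z ∈ R', z ≤ R[idx] := findIdx?_none_forall hcase'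
            have hlt : R'.length < R.length := by
              by_contra hcon
              push_neg at hcon
              have hRR : R'.length = R.length := le_antisymm hlen0 hcon
              have h1 := hcol0' idx (by omega)
              have h2 := hallle (R'[idx]'(by omega)) (List.getElem_mem _)
              omega
            have hidxge : R'.length ≤ idx := by
              by_contra hcon
              push_neg at hcon
              have h1 := hcol0' idx hcon
              have h2 := hallle (R'[idx]'hcon) (List.getElem_mem _)
              omega
            rw [rowInsert_cons_none hcase']
            simp only [List.getD_cons_zero, List.length_append, List.length_singleton]
            refine ⟨by omega, ?_⟩
            intro j hj
            have hjR : j < R.length := by omega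
            rw [List.getD_eq_getElem _ _ (by simpa using hjR),
              List.getD_eq_getElem _ _ (by simp; omega)]
            by_cases hjlt : j < R'.length
            · rw [List.getElem_append_left hjlt]
              exact lt_of_le_of_lt (hsetle j hjR) (hcol0' j hjlt)
            · have hjeq : j = R'.length := by omega
              subst hjeq
              rw [List.getElem_concat_length rfl]
              rw [List.getElem_set]
              by_cases h1 : idx = R'.length
              · rw [if_pos h1]; exact hxy
              · rw [if_neg h1]
                exact lt_trans (hbef' _ (by omega)) hxy
          | some idx' =>
            obtain ⟨hidx', hylt', hbef2⟩ := findIdx?_some_spec hcase'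
            have hle' : idx' ≤ idx := by
              by_contra hcon
              push_neg at hcon
              have h1 := hcol0' idx (by omega)
              have h2 := hbef2 idx hcon
              omega
            rw [rowInsert_cons_some hcase']
            simp only [List.getD_cons_zero, List.length_set]
            refine ⟨hlen0, ?_⟩
            intro j hj
            have hjR : j < R.length := by omega
            rw [List.getD_eq_getElem _ _ (by simpa using hjR),
              List.getD_eq_getElem _ _ (by simpa using hj)]
            rw [List.getElem_set (l := R')]
            by_cases h1 : idx' = j
            · rw [if_pos h1]
              subst h1
              rw [List.getElem_set]
              by_cases h2 : idx = idx'
              · rw [if_pos h2]; exact hxy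
              · rw [if_neg h2]
                exact lt_trans (hbef' idx' (by omega)) hxy
            · rw [if_neg h1]
              exact lt_of_le_of_lt (hsetle j hjR) (hcol0' j hj)
      refine ⟨?_, ?_, ?_, ?_, ?_⟩
      · rw [isTableau_cons]
        have hmemset : ∀ z ∈ R.set idx x,
            z = x ∨ ∃ j, ∃ hj : j < R.length, j ≠ idx ∧ R[j] = z := by
          intro z hz
          obtain ⟨n, hn, hzn⟩ := List.mem_iff_getElem.1 hz
          simp only [List.length_set] at hn
          rw [List.getElem_set] at hzn
          by_cases h : idx = n
          · left; rw [if_pos h] at hzn; exact hzn.symm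
          · right; exact ⟨n, hn, fun hh => h hh.symm, by rw [← hzn, if_neg h]⟩
        refine ⟨hLsort, ?_, ?_, ?_, ?_, hmain.2, ihT⟩
        · intro hcon
          have := congrArg List.length hcon
          simp only [List.length_set, List.length_nil] at this
          omega
        · intro z hz
          rcases hmemset z hz with rfl | ⟨j, hj, hne', rfl⟩
          · exact hx
          · exact hpos _ (List.getElem_mem _)
        · intro z hz hzmem
          have hzmem' : z ∈ R[idx] :: rest.flatten := (ihperm.mem_iff).1 hzmem
          rcases hmemset z hz with rfl | ⟨j, hj, hne', rfl⟩
          · rcases List.mem_cons.1 hzmem' with h | h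
            · omega
            · exact hxrest h
          · rcases List.mem_cons.1 hzmem' with h | h
            · exact hne' ((List.Nodup.getElem_inj_iff hsort.nodup).1 h)
            · exact hdisj _ (List.getElem_mem _) h
        · simpa only [List.length_set] using hmain.1
      · simp only [List.flatten_cons]
        calc R.set idx x ++ (rowInsert (R[idx]) rest).flatten
            ~ R.set idx x ++ (R[idx] :: rest.flatten) := List.Perm.append_left _ ihperm
          _ ~ x :: (R ++ rest.flatten) := set_perm hidx
      · simp only [List.map_cons, List.sum_cons, List.length_set]
        rw [ihsum]
        omega
      · intro i
        match i with
        | 0 => simp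
        | Nat.succ i => simpa using ihmono i
      · intro S' x' hS' hx' hxS' heq hshape
        rcases S' with _ | ⟨R'', rest''⟩
        · simp at hshape
        simp only [List.map_cons, List.cons.injEq] at hshape
        obtain ⟨hlen'', hshape''⟩ := hshape
        rw [isTableau_cons] at hS'
        obtain ⟨hsort'', hne'', hpos'', hdisj'', hlen0'', hcol0'', hrest''⟩ := hS'
        simp only [List.flatten_cons, List.mem_append] at hxS'
        push_neg at hxS'
        obtain ⟨hx'R, hx'rest⟩ := hxS'
        cases hcase2 : R''.findIdx? (fun z => decide (x' < z)) with
        | none =>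
          rw [rowInsert_cons_none hcase2] at heq
          have hlens := congrArg (fun l => (l.getD 0 []).length) heq
          simp only [List.getD_cons_zero, List.length_set, List.length_append,
            List.length_singleton] at hlens
          omega
        | some idx2 =>
          rw [rowInsert_cons_some hcase2] at heq
          obtain ⟨hidx2, hx2, hbef2⟩ := findIdx?_some_spec hcase2
          simp only [List.cons.injEq] at heq
          obtain ⟨hrow, htail⟩ := heq
          rw [List.getD_eq_getElem _ _ hidx2] at htail
          have hy2pos : 0 < R''[idx2] := hpos'' _ (List.getElem_mem _)
          have hy2rest : R''[idx2] ∉ rest''.flatten := hdisj'' _ (List.getElem_mem _)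
          obtain ⟨hrest_eq, hy_eq⟩ :=
            ihinv rest'' (R''[idx2]) hrest'' hy2pos hy2rest htail hshape''
          have hidx2R : idx2 < R.length := by omega
          have hL2 : (R.set idx x)[idx2]'(by simpa using hidx2R) = x' := by
            have h0 := List.getElem_of_eq hrow
              (show idx2 < (R''.set idx2 x').length by simp; omega)
            rw [List.getElem_set, if_pos rfl] at h0
            exact h0.symm
          have hL1 : (R.set idx x)[idx]'(by simpa using hidx) = x := by
            rw [List.getElem_set, if_pos rfl]
          have hx'y : x' < R[idx] := hy_eq ▸ hx2
          have hii : idx2 = idx := by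
            by_contra hne2
            rcases lt_or_gt_of_ne hne2 with hlt | hlt
            · -- idx2 < idx
              have h2 : idx2 + 1 < R''.length := by omega
              have e0 : (R''.set idx2 x')[idx2+1]'(by simp; omega) = R''[idx2+1] :=
                List.getElem_set_ne (by omega) _
              have e1 : (R''.set idx2 x')[idx2+1]'(by simp; omega) =
                  (R.set idx x)[idx2+1]'(by simp; omega) := List.getElem_of_eq hrow _
              have e2 : (R.set idx x)[idx2+1]'(by simp; omega) ≤
                  (R.set idx x)[idx]'(by simp; omega) :=
                sorted_le_getElem hLsort (by omega) (by simp; omega)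
              have e3 : R''[idx2] < R''[idx2+1] := sorted_lt_getElem hsort'' (by omega) h2
              omega
            · -- idx < idx2
              have h2 : idx + 1 < R.length := by omega
              have e1 : (R.set idx x)[idx+1]'(by simp; omega) = R[idx+1] :=
                List.getElem_set_ne (by omega) _
              have e2 : (R.set idx x)[idx+1]'(by simp; omega) ≤
                  (R.set idx x)[idx2]'(by simp; omega) :=
                sorted_le_getElem hLsort (by omega) (by simp; omega)
              have e3 : R[idx] < R[idx+1] := sorted_lt_getElem hsort (by omega) h2
              omega
          subst hii
          have hx'x : x' = x := by rw [← hL2, hL1]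
          have hRR : R'' = R := by
            have h1 : (R''.set idx2 x').set idx2 (R''[idx2]) = R'' := by
              rw [List.set_set, set_self hidx2]
            have h2 : (R.set idx2 x).set idx2 (R[idx2]) = R := by
              rw [List.set_set, set_self hidx2R]
            calc R'' = (R''.set idx2 x').set idx2 (R''[idx2]) := h1.symm
              _ = (R.set idx2 x).set idx2 (R[idx2]) := by rw [hrow, hy_eq]
              _ = R := h2
          exact ⟨by rw [hRR, hrest_eq], hx'x⟩
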